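/- arXiv:1205.0456 — 4 statements merged into one kernel-verified Lean document; each statement's English description precedes it below -/
import Mathlib

section
/- A monomial ideal I in K[x_0,...,x_n] (char K = 0) is Borel-fixed (fixed under the action of upper-triangular invertible matrices) if and only if for every monomial x^α in I and every pair of variables x_i dividing x^α and x_j > x_i, the monomial (x_j/x_i)·x^α also belongs to I. -/
open MvPolynomial Filter

noncomputable section

/-- The Hilbert function of `K[x_0,...,x_{m-1}]/I` in degree `t`. -/
def hilb {K : Type*} [Field K] (m : ℕ) (I : Ideal (MvPolynomial (Fin m) K)) (t : ℕ) : ℤ :=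
  (Module.finrank K (MvPolynomial.homogeneousSubmodule (Fin m) K t) : ℤ) -
  (Module.finrank K
    (Submodule.restrictScalars K
        (I : Submodule (MvPolynomial (Fin m) K) (MvPolynomial (Fin m) K)) ⊓
      MvPolynomial.homogeneousSubmodule (Fin m) K t :
        Submodule K (MvPolynomial (Fin m) K)) : ℤ)

/-- Saturation of `I` w.r.t. the irrelevant ideal: `I^sat = ⋃_k (I : (x_0,...,x_{m-1})^k)`. -/
def sat {K : Type*} [Field K] (m : ℕ) (I : Ideal (MvPolynomial (Fin m) K)) :
    Ideal (MvPolynomial (Fin m) K) :=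
  ⨆ k : ℕ, Submodule.colon
    (I : Submodule (MvPolynomial (Fin m) K) (MvPolynomial (Fin m) K))
    (((Ideal.span (Set.range X)) ^ k : Ideal (MvPolynomial (Fin m) K)) :
      Submodule (MvPolynomial (Fin m) K) (MvPolynomial (Fin m) K))

/-- The combinatorial Borel condition: `x^α ∈ I`, `x_i ∣ x^α`, `j > i` implies
`(x_j/x_i)·x^α ∈ I` (variables ordered `x_{m-1} > ... > x_0`). -/
def borelCond {K : Type*} [Field K] (m : ℕ) (I : Ideal (MvPolynomial (Fin m) K)) : Prop :=
  ∀ α : Fin m →₀ ℕ, monomial α (1:K) ∈ I → ∀ i j : Fin m, i < j → α i ≠ 0 →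
    monomial (α - Finsupp.single i 1 + Finsupp.single j 1) (1:K) ∈ I

/-- `I` is a monomial ideal. -/
def isMonomialIdeal {K : Type*} [Field K] (m : ℕ) (I : Ideal (MvPolynomial (Fin m) K)) : Prop :=
  ∃ S : Set (Fin m →₀ ℕ), I = Ideal.span ((fun α => monomial α (1:K)) '' S)

/-- Increasing elementary Borel move on exponent vectors: `β = (x_{i+1}/x_i)·α`. -/
def stepUp (n : ℕ) (α β : Fin (n+1) →₀ ℕ) : Prop :=
  ∃ i : Fin n, α i.castSucc ≠ 0 ∧
    β = α - Finsupp.single i.castSucc 1 + Finsupp.single i.succ 1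

/-- Borel partial order: `borelGE n α β` means `α ≥_B β`. -/
def borelGE (n : ℕ) (α β : Fin (n+1) →₀ ℕ) : Prop :=
  Relation.ReflTransGen (stepUp n) β α

/-- Rational binomial coefficient `C(x, k) = x(x-1)...(x-k+1)/k!`. -/
def qchoose (x : ℚ) (k : ℕ) : ℚ := (∏ i ∈ Finset.range k, (x - i)) / (Nat.factorial k)

/-- `Σ_{i=0}^{r-1} C(t + a_i - i, a_i)` for a list `l = [a_0, ..., a_{r-1}]`. -/
def gsum (l : List ℕ) (t : ℚ) : ℚ :=
  ((l.zipIdx.map Prod.swap).map (fun q => qchoose (t + (q.2 : ℚ) - (q.1 : ℚ)) q.2)).sum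

/-- First difference operator on polynomials: `Δq(t) = q(t) - q(t-1)`. -/
def dlt (q : Polynomial ℚ) : Polynomial ℚ := q - q.comp (Polynomial.X - 1)


/-! ### Auxiliary lemmas for STATEMENT 0 -/

/-- one elementary Borel move (possibly non-adjacent). -/
def moveRel (m : ℕ) (α β : Fin m →₀ ℕ) : Prop :=
  ∃ i j : Fin m, i < j ∧ α i ≠ 0 ∧ β = α - Finsupp.single i 1 + Finsupp.single j 1

def reach (m : ℕ) : (Fin m →₀ ℕ) → (Fin m →₀ ℕ) → Prop := Relation.ReflTransGen (moveRel m)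

lemma moveRel_add {m : ℕ} {α β δ : Fin m →₀ ℕ} (h : moveRel m α β) :
    moveRel m (α + δ) (β + δ) := by
  obtain ⟨i, j, hij, hi, rfl⟩ := h
  have hne := hij.ne
  refine ⟨i, j, hij, ?_, ?_⟩
  · simp only [Finsupp.add_apply]; omega
  · ext k
    simp only [Finsupp.add_apply, Finsupp.tsub_apply, Finsupp.single_apply]
    have hi' : α i ≥ 1 := Nat.one_le_iff_ne_zero.mpr hi
    rcases eq_or_ne i k with h1 | h1 <;> rcases eq_or_ne j k with h2 | h2 <;>
      simp_all <;> omega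

lemma reach_add {m : ℕ} {α β : Fin m →₀ ℕ} (δ : Fin m →₀ ℕ) (h : reach m α β) :
    reach m (α + δ) (β + δ) := by
  induction h with
  | refl => exact Relation.ReflTransGen.refl
  | tail _ hstep ih => exact ih.tail (moveRel_add hstep)

lemma reach_single {m : ℕ} {i j : Fin m} (hij : i ≤ j) (γ : Fin m →₀ ℕ) :
    reach m (γ + Finsupp.single i 1) (γ + Finsupp.single j 1) := by
  rcases eq_or_lt_of_le hij with rfl | h
  · exact Relation.ReflTransGen.refl
  · have hne := h.ne
    refine Relation.ReflTransGen.single ⟨i, j, h, ?_, ?_⟩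
    · simp
    · ext k
      simp only [Finsupp.add_apply, Finsupp.tsub_apply, Finsupp.single_apply]
      rcases eq_or_ne i k with h1 | h1 <;> rcases eq_or_ne j k with h2 | h2 <;>
        simp_all

section Aux

variable {K : Type*} [Field K]

lemma reach_mem {m : ℕ} {I : Ideal (MvPolynomial (Fin m) K)} (hb : borelCond m I)
    {α β : Fin m →₀ ℕ} (hα : monomial α (1:K) ∈ I) (h : reach m α β) :
    monomial β (1:K) ∈ I := by
  induction h with
  | refl => exact hα
  | tail _ hstep ih =>
    obtain ⟨i, j, hij, hi, rfl⟩ := hstep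
    exact hb _ ih i j hij hi

lemma monomial_mem_of_mem {m : ℕ} {I : Ideal (MvPolynomial (Fin m) K)}
    (h : isMonomialIdeal m I) {p : MvPolynomial (Fin m) K} (hp : p ∈ I) :
    ∀ β ∈ p.support, monomial β (1:K) ∈ I := by
  obtain ⟨S, rfl⟩ := h
  set I := Ideal.span ((fun α => monomial α (1:K)) '' S) with hI
  classical
  refine Submodule.span_induction (p := fun x _ => ∀ β ∈ x.support, monomial β (1:K) ∈ I)
    ?_ ?_ ?_ ?_ hp
  · rintro x ⟨α, hα, rfl⟩ β hβ
    rw [support_monomial] at hβ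
    simp only [one_ne_zero, if_false, Finset.mem_singleton] at hβ
    subst hβ
    exact Ideal.subset_span ⟨β, hα, rfl⟩
  · simp
  · intro x y _ _ hx hy β hβ
    rcases Finset.mem_union.mp (Finsupp.support_add hβ) with h | h
    · exact hx β h
    · exact hy β h
  · intro r x _ hx β hβ
    rw [smul_eq_mul] at hβ
    obtain ⟨γ, _, δ, hδ, rfl⟩ := Finset.mem_add.mp (support_mul r x hβ)
    have : monomial (γ + δ) (1:K) = monomial γ (1:K) * monomial δ (1:K) := by
      simp [monomial_mul]
    rw [this]
    exact Ideal.mul_mem_left _ _ (hx δ hδ)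

lemma support_lin {m : ℕ} (g : Matrix (Fin m) (Fin m) K)
    (htri : ∀ i j : Fin m, i < j → g i j = 0) (k : Fin m) :
    ∀ β ∈ (∑ a, g a k • X a : MvPolynomial (Fin m) K).support,
      ∃ a : Fin m, k ≤ a ∧ β = Finsupp.single a 1 := by
  intro β hβ
  rw [mem_support_iff, coeff_sum] at hβ
  obtain ⟨a, -, ha⟩ := Finset.exists_ne_zero_of_sum_ne_zero hβ
  rw [coeff_smul, smul_eq_mul] at ha
  have h1 : g a k ≠ 0 := fun h => ha (by simp [h])
  have h2 : coeff β (X a : MvPolynomial (Fin m) K) ≠ 0 := fun h => ha (by simp [h])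
  rw [coeff_X'] at h2
  refine ⟨a, ?_, by by_contra hc; simp [Ne.symm hc] at h2⟩
  by_contra hc
  exact h1 (htri a k (lt_of_not_ge hc))

lemma reach_of_support {m : ℕ} (g : Matrix (Fin m) (Fin m) K)
    (htri : ∀ i j : Fin m, i < j → g i j = 0) (α : Fin m →₀ ℕ) :
    ∀ β ∈ (aeval (fun k : Fin m => ∑ a, g a k • X a)
        (monomial α (1:K)) : MvPolynomial (Fin m) K).support, reach m α β := by
  classical
  set f : Fin m → MvPolynomial (Fin m) K := fun k => ∑ a, g a k • X a with hf
  suffices H : ∀ d (α : Fin m →₀ ℕ), (α.sum fun _ e => e) = d →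
      ∀ β ∈ (aeval f (monomial α (1:K)) : MvPolynomial (Fin m) K).support, reach m α β from
    H _ α rfl
  intro d
  induction d using Nat.strong_induction_on with
  | _ d ih =>
    intro α hd β hβ
    rcases eq_or_ne α 0 with rfl | hα0
    · have : (monomial (0 : Fin m →₀ ℕ) (1:K)) = 1 := by simp
      rw [this, map_one] at hβ
      have : β = 0 := by
        have h1 : (1 : MvPolynomial (Fin m) K) = monomial 0 1 := by simp
        rw [h1, support_monomial] at hβ
        simpa using hβ
      rw [this]
      exact Relation.ReflTransGen.refl
    · obtain ⟨k, hk⟩ : ∃ k, α k ≠ 0 := by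
        by_contra hc
        push_neg at hc
        exact hα0 (Finsupp.ext fun a => hc a)
      set α' := α - Finsupp.single k 1 with hα'
      have hαeq : α = α' + Finsupp.single k 1 := by
        ext a
        simp only [hα', Finsupp.add_apply, Finsupp.tsub_apply, Finsupp.single_apply]
        rcases eq_or_ne k a with h | h
        · subst h; simp; omega
        · simp [h]
      have hmon : monomial α (1:K) = monomial α' 1 * X k := by
        rw [X, monomial_mul, mul_one, ← hαeq]
      rw [hmon, map_mul, aeval_X] at hβ
      obtain ⟨γ, hγ, δ, hδ, rfl⟩ := Finset.mem_add.mp (support_mul _ _ hβ)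
      obtain ⟨a, hka, rfl⟩ := support_lin g htri k δ hδ
      have hdeg : (α'.sum fun _ e => e) < d := by
        have h1 : (α.sum fun _ e => e) = (α'.sum fun _ e => e) + 1 := by
          rw [hαeq, Finsupp.sum_add_index (by simp) (by intros; rfl)]
          simp
        omega
      have hγreach : reach m α' γ := ih _ hdeg α' rfl γ hγ
      rw [hαeq]
      exact Relation.ReflTransGen.trans (reach_add _ hγreach) (reach_single hka γ)

lemma aeval_mul_matrix {m : ℕ} (g h : Matrix (Fin m) (Fin m) K) :
    (aeval (fun j : Fin m => ∑ i, g i j • X i) :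
        MvPolynomial (Fin m) K →ₐ[K] MvPolynomial (Fin m) K).comp
      (aeval (fun j : Fin m => ∑ i, h i j • X i)) =
    aeval (fun j : Fin m => ∑ i, (g * h) i j • X i) := by
  apply MvPolynomial.algHom_ext
  intro k
  simp only [AlgHom.comp_apply, aeval_X, map_sum, map_smul, Matrix.mul_apply,
    Finset.sum_smul, Finset.smul_sum, smul_smul]
  rw [Finset.sum_comm]
  exact Finset.sum_congr rfl fun b _ => Finset.sum_congr rfl fun a _ => by rw [mul_comm]

lemma aeval_one_matrix (m : ℕ) :
    (aeval (fun j : Fin m => ∑ i, (1 : Matrix (Fin m) (Fin m) K) i j • X i) :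
        MvPolynomial (Fin m) K →ₐ[K] MvPolynomial (Fin m) K) = AlgHom.id K _ := by
  apply MvPolynomial.algHom_ext
  intro k
  simp [Matrix.one_apply, ite_smul]

lemma ideal_map_algHom_id {R : Type*} [CommRing R] {A : Type*} [CommRing A] [Algebra R A]
    (I : Ideal A) : Ideal.map (AlgHom.id R A) I = I := by
  have : (⇑(AlgHom.id R A) '' (I : Set A)) = I := by simp
  rw [Ideal.map, this, Ideal.span_eq]

lemma ideal_map_comp {m : ℕ} (f g : MvPolynomial (Fin m) K →ₐ[K] MvPolynomial (Fin m) K)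
    (I : Ideal (MvPolynomial (Fin m) K)) :
    Ideal.map f (Ideal.map g I) = Ideal.map (f.comp g) I :=
  Ideal.map_map g.toRingHom f.toRingHom

lemma elem_vals {m : ℕ} {i j : Fin m} (hij : i < j) :
    (fun k : Fin m => ∑ a, (((1 + Matrix.single j i 1) : Matrix (Fin m) (Fin m) K) a k) • X a)
      = fun k : Fin m => if k = i then X i + X j else (X k : MvPolynomial (Fin m) K) := by
  funext k
  simp only [Matrix.add_apply, Matrix.one_apply, Matrix.single, Matrix.of_apply,
    add_smul, ite_smul, one_smul, zero_smul, Finset.sum_add_distrib]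
  rcases eq_or_ne k i with rfl | hk
  · simp [Finset.sum_ite_eq', hij.ne']
  · simp [Finset.sum_ite_eq', hk, Ne.symm hk]

lemma elem_tri {m : ℕ} {i j : Fin m} (hij : i < j) :
    ∀ a b : Fin m, a < b →
      (((1 + Matrix.single j i 1) : Matrix (Fin m) (Fin m) K) a b) = 0 := by
  intro a b hab
  simp only [Matrix.add_apply, Matrix.one_apply, Matrix.single, Matrix.of_apply]
  rw [if_neg hab.ne, if_neg, add_zero]
  rintro ⟨rfl, rfl⟩
  exact absurd hab (not_lt_of_gt hij)

lemma elem_det {m : ℕ} {i j : Fin m} (hij : i < j) :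
    IsUnit ((1 + Matrix.single j i 1) : Matrix (Fin m) (Fin m) K).det := by
  have h := Matrix.det_of_lowerTriangular
    ((1 + Matrix.single j i 1) : Matrix (Fin m) (Fin m) K)
    (fun a b hab => elem_tri hij a b (OrderDual.toDual_lt_toDual.mp hab))
  rw [h]
  have : ∀ a : Fin m, (((1 + Matrix.single j i 1) : Matrix (Fin m) (Fin m) K) a a) = 1 := by
    intro a
    simp only [Matrix.add_apply, Matrix.one_apply_eq, Matrix.single, Matrix.of_apply]
    rw [if_neg, add_zero]
    rintro ⟨rfl, rfl⟩
    exact absurd hij (lt_irrefl _)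
  simp [this]

lemma aeval_if_monomial {m : ℕ} {i j : Fin m} (α : Fin m →₀ ℕ) :
    (aeval (fun k : Fin m => if k = i then X i + X j else X k) (monomial α (1:K))
      : MvPolynomial (Fin m) K)
      = monomial (Finsupp.erase i α) 1 * (X i + X j) ^ (α i) := by
  classical
  rw [aeval_monomial, map_one, one_mul]
  have hsplit : α = Finsupp.erase i α + Finsupp.single i (α i) :=
    (Finsupp.erase_add_single i α).symm
  rw [show (α.prod fun n e => (if n = i then X i + X j else (X n : MvPolynomial (Fin m) K)) ^ e)
      = ((Finsupp.erase i α) + Finsupp.single i (α i)).prod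
          (fun n e => (if n = i then X i + X j else (X n : MvPolynomial (Fin m) K)) ^ e) from by
    rw [← hsplit]]
  rw [Finsupp.prod_add_index (fun _ _ => pow_zero _) (fun a _ b c => pow_add _ b c)]
  congr 1
  · rw [monomial_eq, C_1, one_mul]
    refine Finsupp.prod_congr fun x hx => ?_
    rw [Finsupp.support_erase] at hx
    rw [if_neg (Finset.ne_of_mem_erase hx)]
  · have hps := Finsupp.prod_single_index (a := i) (b := α i)
      (h := fun n e => (if n = i then X i + X j else (X n : MvPolynomial (Fin m) K)) ^ e)
      (pow_zero _)
    rw [hps]; simp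

lemma coeff_binom {m : ℕ} {i j : Fin m} (hij : i ≠ j) {a : ℕ} (ha : a ≠ 0) :
    coeff (Finsupp.single i (a-1) + Finsupp.single j 1)
      ((X i + X j : MvPolynomial (Fin m) K) ^ a) = (a : K) := by
  classical
  rw [add_pow, coeff_sum]
  have hterm : ∀ k, (X i : MvPolynomial (Fin m) K) ^ k * X j ^ (a - k) * (a.choose k : MvPolynomial (Fin m) K)
      = monomial (Finsupp.single i k + Finsupp.single j (a-k)) ((a.choose k : K)) := by
    intro k
    rw [X_pow_eq_monomial, X_pow_eq_monomial, monomial_mul, one_mul]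
    rw [show ((a.choose k : ℕ) : MvPolynomial (Fin m) K) = C ((a.choose k : ℕ) : K) by
      simp]
    rw [show (C ((a.choose k : ℕ) : K) : MvPolynomial (Fin m) K)
      = monomial 0 ((a.choose k : ℕ) : K) from rfl]
    rw [monomial_mul, add_zero, one_mul]
  simp only [hterm, coeff_monomial]
  rw [Finset.sum_eq_single_of_mem (a-1) (Finset.mem_range.mpr (by omega))]
  · have h1 : a - (a-1) = 1 := by omega
    rw [h1, if_pos rfl, Nat.choose_symm (by omega), Nat.choose_one_right]
  · intro b _ hb
    rw [if_neg]
    intro heq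
    have := congrArg (fun f : Fin m →₀ ℕ => f i) heq
    simp [Finsupp.single_apply, hij.symm] at this
    exact hb this

end Aux

/-- A monomial ideal `I` in `K[x_0,...,x_n]` (char K = 0) is Borel-fixed
(fixed under the action of invertible matrices that are upper triangular w.r.t. the
ordering `x_n > ... > x_0`) iff for every monomial `x^α ∈ I`, every `x_i ∣ x^α` and
every `x_j > x_i`, also `(x_j/x_i)·x^α ∈ I`. -/
theorem statement0 {K : Type*} [Field K] [CharZero K] (n : ℕ)
    (I : Ideal (MvPolynomial (Fin (n+1)) K))
    (hmon : isMonomialIdeal (n+1) I) :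
    (∀ g : Matrix (Fin (n+1)) (Fin (n+1)) K, IsUnit g.det →
        (∀ i j : Fin (n+1), i < j → g i j = 0) →
        Ideal.map
          (aeval (fun j : Fin (n+1) => ∑ i, g i j • X i) :
            MvPolynomial (Fin (n+1)) K →ₐ[K] MvPolynomial (Fin (n+1)) K) I = I)
      ↔ borelCond (n+1) I := by
  classical
  constructor
  · -- Borel-fixed → combinatorial condition
    intro hfix α hα i j hij hi
    have hmap := hfix ((1 + Matrix.single j i 1) : Matrix (Fin (n+1)) (Fin (n+1)) K)
      (elem_det hij) (elem_tri hij)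
    have hp : (aeval (fun k : Fin (n+1) =>
          ∑ a, (((1 + Matrix.single j i 1) : Matrix (Fin (n+1)) (Fin (n+1)) K) a k) • X a)
          (monomial α (1:K)) : MvPolynomial (Fin (n+1)) K) ∈ I := by
      rw [← hmap]
      exact Ideal.mem_map_of_mem _ hα
    rw [elem_vals hij, aeval_if_monomial] at hp
    set β := α - Finsupp.single i 1 + Finsupp.single j 1 with hβdef
    have hβ : β = Finsupp.erase i α + (Finsupp.single i (α i - 1) + Finsupp.single j 1) := by
      have hne := hij.ne
      ext k
      simp only [hβdef, Finsupp.add_apply, Finsupp.tsub_apply]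
      rcases eq_or_ne k i with rfl | h1
      · simp [Finsupp.erase_apply, Finsupp.single_apply, Ne.symm hne]
      · rcases eq_or_ne k j with rfl | h2
        · simp [Finsupp.erase_apply, Finsupp.single_apply, h1, Ne.symm h1]
        · simp [Finsupp.erase_apply, Finsupp.single_apply, h1, Ne.symm h1, h2, Ne.symm h2]
    have hc : coeff β ((monomial (Finsupp.erase i α) 1 : MvPolynomial (Fin (n+1)) K)
        * (X i + X j) ^ (α i)) = ((α i : ℕ) : K) := by
      rw [hβ, coeff_monomial_mul, coeff_binom hij.ne hi, one_mul]
    have hsupp : β ∈ ((monomial (Finsupp.erase i α) 1 : MvPolynomial (Fin (n+1)) K)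
        * (X i + X j) ^ (α i)).support := by
      rw [mem_support_iff, hc]
      exact_mod_cast hi
    exact monomial_mem_of_mem hmon hp β hsupp
  · -- combinatorial condition → Borel-fixed
    intro hb g hdet htri
    have hle : ∀ g' : Matrix (Fin (n+1)) (Fin (n+1)) K, (∀ i j, i < j → g' i j = 0) →
        Ideal.map (aeval (fun j : Fin (n+1) => ∑ i, g' i j • X i) :
          MvPolynomial (Fin (n+1)) K →ₐ[K] MvPolynomial (Fin (n+1)) K) I ≤ I := by
      intro g' htri'
      obtain ⟨S, hS⟩ := hmon
      conv_lhs => rw [hS]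
      rw [Ideal.map_span, Ideal.span_le]
      rintro x ⟨y, ⟨α, hα, rfl⟩, rfl⟩
      have hαI : monomial α (1:K) ∈ I := by
        rw [hS]; exact Ideal.subset_span ⟨α, hα, rfl⟩
      set p : MvPolynomial (Fin (n+1)) K :=
        aeval (fun j : Fin (n+1) => ∑ i, g' i j • X i) (monomial α (1:K)) with hpdef
      have hmem : ∀ β ∈ p.support, monomial β (1:K) ∈ I := fun β hβ =>
        reach_mem hb hαI (reach_of_support g' htri' α β hβ)
      show p ∈ I
      rw [← support_sum_monomial_coeff p]
      refine Submodule.sum_mem _ fun β hβ => ?_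
      rw [show (monomial β (coeff β p) : MvPolynomial (Fin (n+1)) K)
          = C (coeff β p) * monomial β 1 by simp [C_mul_monomial]]
      exact Ideal.mul_mem_left _ _ (hmem β hβ)
    refine le_antisymm (hle g htri) ?_
    haveI := Matrix.invertibleOfIsUnitDet g hdet
    have htri' : ∀ i j : Fin (n+1), i < j → g⁻¹ i j = 0 := by
      have hbt : g.BlockTriangular OrderDual.toDual := fun a b hab =>
        htri a b (OrderDual.toDual_lt_toDual.mp hab)
      have hinv := Matrix.blockTriangular_inv_of_blockTriangular hbt
      intro i j hij
      exact hinv (OrderDual.toDual_lt_toDual.mpr hij)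
    have h2 := hle g⁻¹ htri'
    calc I = Ideal.map ((aeval (fun j : Fin (n+1) => ∑ i, g i j • X i) :
            MvPolynomial (Fin (n+1)) K →ₐ[K] MvPolynomial (Fin (n+1)) K).comp
          (aeval (fun j : Fin (n+1) => ∑ i, g⁻¹ i j • X i))) I := by
          rw [aeval_mul_matrix, Matrix.mul_nonsing_inv g hdet, aeval_one_matrix,
            ideal_map_algHom_id]
      _ = Ideal.map (aeval (fun j : Fin (n+1) => ∑ i, g i j • X i) :
            MvPolynomial (Fin (n+1)) K →ₐ[K] MvPolynomial (Fin (n+1)) K)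
          (Ideal.map (aeval (fun j : Fin (n+1) => ∑ i, g⁻¹ i j • X i) :
            MvPolynomial (Fin (n+1)) K →ₐ[K] MvPolynomial (Fin (n+1)) K) I) :=
          (ideal_map_comp _ _ I).symm
      _ ≤ Ideal.map (aeval (fun j : Fin (n+1) => ∑ i, g i j • X i) :
            MvPolynomial (Fin (n+1)) K →ₐ[K] MvPolynomial (Fin (n+1)) K) I :=
          Ideal.map_mono h2
end
end

section
/- Let B be a Borel set in the poset of degree-r monomials of K[x_0,...,x_n] and let x^β be a monomial in B that is minimal for the Borel order and divisible by x_0. Then B \ {x^β} is again a Borel set. -/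
open MvPolynomial Filter

noncomputable section

/-- if `B` is a Borel set of degree-`r` monomials and `x^β ∈ B` is
Borel-minimal and divisible by `x_0`, then `B \ {x^β}` is again a Borel set. -/
theorem statement6 (n r : ℕ) (B : Finset (Fin (n+1) →₀ ℕ))
    (hdeg : ∀ α ∈ B, (∑ j, α j) = r)
    (hclosed : ∀ α ∈ B, ∀ γ, stepUp n α γ → γ ∈ B)
    (β : Fin (n+1) →₀ ℕ) (hβ : β ∈ B)
    (hmin : ∀ γ ∈ B, borelGE n β γ → γ = β)
    (h0 : β 0 ≠ 0) :
    ∀ α ∈ B.erase β, ∀ γ, stepUp n α γ → γ ∈ B.erase β := by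
  intro α hα γ hstep
  obtain ⟨hne, hαB⟩ := Finset.mem_erase.mp hα
  refine Finset.mem_erase.mpr ⟨?_, hclosed α hαB γ hstep⟩
  intro hγ
  subst hγ
  exact hne (hmin α hαB (Relation.ReflTransGen.single hstep))
end
end

section
/- Let N̄ be an order set (closed under decreasing elementary moves) in the degree-r monomials of K[x_1,...,x_n], and let N be the order set in the degree-r monomials of K[x_0,...,x_n] generated from N̄ by decreasing moves. Then |N| = Σ_{x^α ∈ N̄} (α_1 + 1), where α_1 is the exponent of x_1 in x^α. -/
open MvPolynomial Filter

noncomputable section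

-- auxiliary
def s11lift (n : ℕ) (γ : Fin (n+1) →₀ ℕ) : Fin (n+1) →₀ ℕ :=
  γ - Finsupp.single 0 (γ 0) + Finsupp.single 1 (γ 0)

lemma s11lift_apply (n : ℕ) (γ : Fin (n+1) →₀ ℕ) (a : Fin (n+1)) :
    s11lift n γ a = γ a - (if (0:Fin (n+1)) = a then γ 0 else 0)
      + (if (1:Fin (n+1)) = a then γ 0 else 0) := by
  simp [s11lift, Finsupp.add_apply, Finsupp.tsub_apply, Finsupp.single_apply]

lemma s11_h01 (n : ℕ) (hn : 0 < n) : (0 : Fin (n+1)) ≠ 1 := by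
  intro h; have := congrArg Fin.val h; simp [Fin.val_one] at this; omega

lemma s11_up (n : ℕ) (hn : 0 < n) (γ : Fin (n+1) →₀ ℕ) :
    Relation.ReflTransGen (stepUp n) γ (s11lift n γ) := by
  have h01 := s11_h01 n hn
  generalize hk : γ 0 = k
  induction k generalizing γ with
  | zero =>
    have : s11lift n γ = γ := by
      ext a; rw [s11lift_apply]; split_ifs with h1 h2 <;> omega
    rw [this]
  | succ k ih =>
    set δ := γ - Finsupp.single 0 1 + Finsupp.single 1 1 with hδ
    have hδap : ∀ a, δ a = γ a - (if (0:Fin (n+1)) = a then 1 else 0)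
        + (if (1:Fin (n+1)) = a then 1 else 0) := by
      intro a
      simp [hδ, Finsupp.add_apply, Finsupp.tsub_apply, Finsupp.single_apply]
    have hδ0 : δ 0 = k := by
      have := hδap 0
      simp [Ne.symm h01] at this; omega
    have hstep : stepUp n γ δ := by
      refine ⟨⟨0, hn⟩, ?_, ?_⟩
      · have hc : (⟨0, hn⟩ : Fin n).castSucc = 0 := rfl
        rw [hc]; omega
      · have hc : (⟨0, hn⟩ : Fin n).castSucc = 0 := rfl
        have hs : (⟨0, hn⟩ : Fin n).succ = 1 := by
          ext; simp [Fin.val_one, Nat.mod_eq_of_lt (by omega : 1 < n + 1)]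
        rw [hc, hs]
    have hlift : s11lift n δ = s11lift n γ := by
      ext a
      rw [s11lift_apply, s11lift_apply, hδap a, hδ0, hk]
      rcases eq_or_ne a 0 with rfl | h0
      · simp [Ne.symm h01]; omega
      · rcases eq_or_ne a 1 with rfl | h1
        · simp [h01, Ne.symm h0]; omega
        · simp [Ne.symm h0, Ne.symm h1]
    exact Relation.ReflTransGen.head hstep (hlift ▸ ih δ hδ0)

lemma s11_down (n : ℕ) (hn : 0 < n) (Nbar : Finset (Fin (n+1) →₀ ℕ))
    (hNbar0 : ∀ α ∈ Nbar, α 0 = 0)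
    (hdown : ∀ α ∈ Nbar, ∀ β : Fin (n+1) →₀ ℕ, stepUp n β α → β 0 = 0 → β ∈ Nbar)
    (γ α : Fin (n+1) →₀ ℕ) (hα : α ∈ Nbar)
    (h : Relation.ReflTransGen (stepUp n) γ α) : s11lift n γ ∈ Nbar := by
  have h01 := s11_h01 n hn
  induction h using Relation.ReflTransGen.head_induction_on with
  | refl =>
    have hα0 := hNbar0 α hα
    have : s11lift n α = α := by
      ext a; rw [s11lift_apply, hα0]; split_ifs <;> omega
    rwa [this]
  | head hst hrest ih =>
    rename_i γ' δ
    obtain ⟨u, hu, hδ⟩ := hst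
    have hδap : ∀ a, δ a = γ' a - (if u.castSucc = a then 1 else 0)
        + (if u.succ = a then 1 else 0) := by
      intro a
      simp [hδ, Finsupp.add_apply, Finsupp.tsub_apply, Finsupp.single_apply]
    have hcs_ne : u.castSucc ≠ u.succ := (Fin.castSucc_lt_succ : u.castSucc < u.succ).ne
    have hsucc0 : u.succ ≠ 0 := Fin.succ_ne_zero u
    rcases eq_or_ne u.castSucc 0 with hc0 | hc0
    · -- move from x_0 to x_1 : lift γ' = lift δ
      have hsucc1 : u.succ = 1 := by
        have : u = ⟨0, hn⟩ := by
          have := congrArg Fin.val hc0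
          simp [Fin.castSucc] at this
          exact Fin.ext this
        rw [this]; ext; simp [Fin.val_one, Nat.mod_eq_of_lt (by omega : 1 < n + 1)]
      have hg0 : γ' 0 ≠ 0 := hc0 ▸ hu
      have hδ0 : δ 0 = γ' 0 - 1 := by
        have := hδap 0; rw [hc0, hsucc1] at this
        simp [Ne.symm h01] at this; omega
      have : s11lift n γ' = s11lift n δ := by
        ext a
        rw [s11lift_apply, s11lift_apply, hδap a, hδ0, hc0, hsucc1]
        rcases eq_or_ne a 0 with rfl | h0
        · simp [Ne.symm h01] <;> omega
        · rcases eq_or_ne a 1 with rfl | h1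
          · simp [h01, Ne.symm h0] <;> omega
          · simp [Ne.symm h0, Ne.symm h1]
      rw [this]; exact ih
    · -- move among x_1..x_n : lift γ' steps up to lift δ
      have hl0 : s11lift n γ' 0 = 0 := by
        rw [s11lift_apply]; simp [Ne.symm h01]
      refine hdown _ ih _ ⟨u, ?_, ?_⟩ hl0
      · rw [s11lift_apply]
        simp only [hc0, if_neg (Ne.symm hc0)]
        rcases eq_or_ne ((1:Fin (n+1))) u.castSucc with h1 | h1 <;> simp [h1] <;> omega
      · ext a
        have hrhs : (s11lift n γ' - Finsupp.single u.castSucc 1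
            + Finsupp.single u.succ 1 : Fin (n+1) →₀ ℕ) a
            = s11lift n γ' a - (if u.castSucc = a then 1 else 0)
              + (if u.succ = a then 1 else 0) := by
          simp [Finsupp.add_apply, Finsupp.tsub_apply, Finsupp.single_apply]
        rw [hrhs, s11lift_apply, s11lift_apply, hδap a]
        have hδ00 : δ 0 = γ' 0 := by
          have := hδap 0; simp [hc0, Ne.symm hc0, hsucc0] at this
          omega
        rw [hδ00]
        have hgu : γ' u.castSucc ≠ 0 := hu
        rcases eq_or_ne a 0 with rfl | h0
        · simp [Ne.symm h01, hc0, hsucc0]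
        · rcases eq_or_ne a u.castSucc with rfl | hcs
          · by_cases h1 : (1:Fin (n+1)) = u.castSucc <;>
              simp [h1, Ne.symm hc0, Ne.symm hcs_ne, Ne.symm h0] <;> omega
          · rcases eq_or_ne a u.succ with rfl | hsu
            · by_cases h1 : (1:Fin (n+1)) = u.succ <;>
              simp [h1, hcs_ne, hsucc0, Ne.symm h0, Ne.symm hcs] <;> omega
            · by_cases h1 : (1:Fin (n+1)) = a <;>
              simp [h1, Ne.symm h0, Ne.symm hcs, Ne.symm hsu] <;> omega

lemma s11f_apply (n : ℕ) (α : Fin (n+1) →₀ ℕ) (j : ℕ) (a : Fin (n+1)) :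
    (α - Finsupp.single 1 j + Finsupp.single 0 j : Fin (n+1) →₀ ℕ) a
      = α a - (if (1:Fin (n+1)) = a then j else 0)
        + (if (0:Fin (n+1)) = a then j else 0) := by
  simp [Finsupp.add_apply, Finsupp.tsub_apply, Finsupp.single_apply]

lemma s11_lift_f (n : ℕ) (hn : 0 < n) (α : Fin (n+1) →₀ ℕ) (j : ℕ)
    (hα0 : α 0 = 0) (hj : j ≤ α 1) :
    s11lift n (α - Finsupp.single 1 j + Finsupp.single 0 j) = α := by
  have h01 := s11_h01 n hn
  have hf0 : (α - Finsupp.single 1 j + Finsupp.single 0 j : Fin (n+1) →₀ ℕ) 0 = j := by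
    rw [s11f_apply]; simp [Ne.symm h01, hα0]
  ext a
  rw [s11lift_apply, hf0, s11f_apply]
  rcases eq_or_ne a 0 with rfl | h0
  · simp [Ne.symm h01, hα0]
  · rcases eq_or_ne a 1 with rfl | h1
    · simp [h01, Ne.symm h0] <;> omega
    · simp [Ne.symm h0, Ne.symm h1]

lemma s11_f_lift (n : ℕ) (hn : 0 < n) (γ : Fin (n+1) →₀ ℕ) :
    (s11lift n γ - Finsupp.single 1 (γ 0) + Finsupp.single 0 (γ 0) : Fin (n+1) →₀ ℕ) = γ := by
  have h01 := s11_h01 n hn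
  ext a
  rw [s11f_apply, s11lift_apply]
  rcases eq_or_ne a 0 with rfl | h0
  · simp [Ne.symm h01]
  · rcases eq_or_ne a 1 with rfl | h1
    · simp [h01, Ne.symm h0] <;> omega
    · simp [Ne.symm h0, Ne.symm h1]

lemma s11_lift_one (n : ℕ) (hn : 0 < n) (γ : Fin (n+1) →₀ ℕ) :
    s11lift n γ 1 = γ 1 + γ 0 := by
  have h01 := s11_h01 n hn
  rw [s11lift_apply]; simp [h01]


/-- counting lemma: `N̄` an order set in the degree-`r` monomials of
`K[x_1,...,x_n]` (exponent vectors with `α 0 = 0`), `N` the order set it generates by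
decreasing moves in `K[x_0,...,x_n]`. Then `|N| = Σ_{x^α ∈ N̄} (α_1 + 1)`. -/
theorem statement11 (n r : ℕ) (hn : 0 < n)
    (Nbar : Finset (Fin (n+1) →₀ ℕ))
    (hNbar : ∀ α ∈ Nbar, (∑ j, α j) = r ∧ α 0 = 0)
    (hdown : ∀ α ∈ Nbar, ∀ β : Fin (n+1) →₀ ℕ, stepUp n β α → β 0 = 0 → β ∈ Nbar) :
    {γ : Fin (n+1) →₀ ℕ | ∃ α ∈ Nbar, borelGE n α γ}.ncard =
      ∑ α ∈ Nbar, (α 1 + 1) := by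
  classical
  have h01 := s11_h01 n hn
  have hNbar0 : ∀ α ∈ Nbar, α 0 = 0 := fun α hα => (hNbar α hα).2
  set f : (Σ _ : Fin (n+1) →₀ ℕ, ℕ) → (Fin (n+1) →₀ ℕ) :=
    fun p => p.1 - Finsupp.single 1 p.2 + Finsupp.single 0 p.2 with hf
  set F := (Nbar.sigma (fun α => Finset.range (α 1 + 1))).image f with hF
  have hset : {γ : Fin (n+1) →₀ ℕ | ∃ α ∈ Nbar, borelGE n α γ} = ↑F := by
    ext γ
    simp only [Set.mem_setOf_eq, hF, Finset.coe_image, Set.mem_image, Finset.mem_coe,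
      Finset.mem_sigma, Finset.mem_range]
    constructor
    · rintro ⟨α, hα, hb⟩
      have hlift : s11lift n γ ∈ Nbar := s11_down n hn Nbar hNbar0 hdown γ α hα hb
      refine ⟨⟨s11lift n γ, γ 0⟩, ⟨hlift, ?_⟩, ?_⟩
      · show γ 0 < s11lift n γ 1 + 1
        rw [s11_lift_one n hn]; omega
      · exact s11_f_lift n hn γ
    · rintro ⟨⟨α, j⟩, ⟨hα, hj⟩, rfl⟩
      refine ⟨α, hα, ?_⟩
      have hj' : j ≤ α 1 := Nat.lt_succ_iff.mp (by simpa using hj)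
      have hlf : s11lift n (f ⟨α, j⟩) = α :=
        s11_lift_f n hn α j (hNbar0 α hα) hj'
      have hup := s11_up n hn (f ⟨α, j⟩)
      rw [hlf] at hup
      exact hup
  rw [hset, Set.ncard_coe_finset, hF]
  rw [Finset.card_image_of_injOn, Finset.card_sigma]
  · simp
  · rintro ⟨α, j⟩ hp ⟨α', j'⟩ hq heq
    simp only [Finset.mem_coe, Finset.mem_sigma, Finset.mem_range] at hp hq
    have hα := s11_lift_f n hn α j (hNbar0 α hp.1) (Nat.lt_succ_iff.mp (by simpa using hp.2))
    have hα' := s11_lift_f n hn α' j' (hNbar0 α' hq.1) (Nat.lt_succ_iff.mp (by simpa using hq.2))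
    have h1 : α = α' := by rw [← hα, ← hα']; exact congrArg _ heq
    have hf0 : ∀ (β : Fin (n+1) →₀ ℕ) (k : ℕ), β 0 = 0 →
        (β - Finsupp.single 1 k + Finsupp.single 0 k : Fin (n+1) →₀ ℕ) 0 = k := by
      intro β k hβ; rw [s11f_apply]; simp [Ne.symm h01, hβ]
    have h2 : j = j' := by
      have e1 := hf0 α j (hNbar0 α hp.1)
      have e2 := hf0 α' j' (hNbar0 α' hq.1)
      rw [← e1, ← e2]
      exact DFunLike.congr_fun heq 0
    subst h1; subst h2; rfl
end
end

section
/- Constant Hilbert polynomial case of the bijection: if B is a Borel set in the degree-r monomials of K[x_0,...,x_n] whose complement N has cardinality c ≤ r and every monomial of N is divisible by x_0, then the quotient K[x_0,...,x_n]/⟨B⟩^sat has constant Hilbert polynomial equal to c. -/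
open MvPolynomial Filter

noncomputable section

namespace St15

variable {n : ℕ}

lemma degF (α : Fin n →₀ ℕ) : α.degree = ∑ j, α j :=
  Finset.sum_subset (Finset.subset_univ _) (fun _ _ hx => Finsupp.notMem_support_iff.mp hx)

lemma degree_add (a b : Fin n →₀ ℕ) : (a+b).degree = a.degree + b.degree := by
  simp [degF, Finset.sum_add_distrib]

lemma degree_single (i : Fin n) (k : ℕ) : (Finsupp.single i k).degree = k := by
  simp [degF, Finsupp.single_apply]

lemma degree_erase_add (α : Fin (n+1) →₀ ℕ) : (α.erase 0).degree + α 0 = α.degree := by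
  conv_rhs => rw [← Finsupp.erase_add_single 0 α]
  rw [degree_add, degree_single]

lemma extract (ρ : Fin n →₀ ℕ) : ∀ k, k ≤ ρ.degree →
    ∃ g : Fin n →₀ ℕ, g ≤ ρ ∧ g.degree = k := by
  intro k
  induction k with
  | zero => exact fun _ => ⟨0, zero_le, map_zero _⟩
  | succ k ih =>
    intro hk
    obtain ⟨g, hg, hdeg⟩ := ih (Nat.le_of_succ_le hk)
    have hex : ∃ j, g j < ρ j := by
      by_contra h
      push_neg at h
      have : ρ = g := le_antisymm (Finsupp.le_def.mpr h) hg
      rw [this] at hk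
      omega
    obtain ⟨j, hj⟩ := hex
    refine ⟨g + Finsupp.single j 1, Finsupp.le_def.mpr fun a => ?_, by
      rw [degree_add, degree_single, hdeg]⟩
    rcases eq_or_ne j a with rfl | hne
    · simpa using hj
    · simp only [Finsupp.add_apply, Finsupp.single_apply, if_neg hne]
      exact le_trans (by omega) (Finsupp.le_def.mp hg a)

variable {B : Finset (Fin (n+1) →₀ ℕ)}

lemma moveUp (hclosed : ∀ α ∈ B, ∀ γ, stepUp n α γ → γ ∈ B) :
    ∀ (j : Fin (n+1)) (β), β ∈ B → β 0 ≠ 0 →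
      β - Finsupp.single 0 1 + Finsupp.single j 1 ∈ B := by
  intro j
  induction j using Fin.induction with
  | zero =>
    intro β hβ h0
    have : β - Finsupp.single 0 1 + Finsupp.single (0:Fin (n+1)) 1 = β :=
      tsub_add_cancel_of_le (Finsupp.single_le_iff.mpr (Nat.one_le_iff_ne_zero.mpr h0))
    rwa [this]
  | succ i ih =>
    intro β hβ h0
    have h1 := ih β hβ h0
    have h2 : ((β - Finsupp.single 0 1 + Finsupp.single i.castSucc 1 : Fin (n+1) →₀ ℕ))
        i.castSucc ≠ 0 := by
      simp [Finsupp.add_apply, Finsupp.single_eq_same]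
    have := hclosed _ h1 _ ⟨i, h2, rfl⟩
    rwa [add_tsub_cancel_right] at this

lemma moveMany (hclosed : ∀ α ∈ B, ∀ γ, stepUp n α γ → γ ∈ B) :
    ∀ (d : ℕ) (δ : Fin (n+1) →₀ ℕ), δ.degree = d → δ 0 = 0 →
      ∀ β ∈ B, d ≤ β 0 → β - Finsupp.single 0 d + δ ∈ B := by
  intro d
  induction d with
  | zero =>
    intro δ hdeg h0 β hβ _
    rw [(Finsupp.degree_eq_zero_iff δ).mp hdeg]
    simpa using hβ
  | succ d ih =>
    intro δ hdeg h0 β hβ hle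
    have hδ : δ ≠ 0 := by
      intro h; rw [h] at hdeg; simp at hdeg
    obtain ⟨j, hj⟩ := Finsupp.support_nonempty_iff.mpr hδ
    have hjval : δ j ≠ 0 := Finsupp.mem_support_iff.mp hj
    have hj0 : j ≠ 0 := by rintro rfl; exact hjval h0
    set δ' := δ - Finsupp.single j 1 with hδ'
    have hsum : δ' + Finsupp.single j 1 = δ :=
      tsub_add_cancel_of_le (Finsupp.single_le_iff.mpr (Nat.one_le_iff_ne_zero.mpr hjval))
    have hdeg' : δ'.degree = d := by
      have := degree_add δ' (Finsupp.single j 1)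
      rw [hsum, hdeg, degree_single] at this
      omega
    have h0' : δ' 0 = 0 := by
      simp [hδ', Finsupp.tsub_apply, h0]
    have hB' := ih δ' hdeg' h0' β hβ (by omega)
    have hc0 : ((β - Finsupp.single 0 d + δ' : Fin (n+1) →₀ ℕ)) 0 ≠ 0 := by
      simp only [Finsupp.add_apply, Finsupp.tsub_apply, Finsupp.single_eq_same, h0']
      omega
    have := moveUp hclosed j _ hB' hc0
    have key : β - Finsupp.single 0 d + δ' - Finsupp.single 0 1 + Finsupp.single j 1
        = β - Finsupp.single 0 (d+1) + δ := by
      ext a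
      have hsa := DFunLike.congr_fun hsum a
      simp only [Finsupp.add_apply, Finsupp.tsub_apply] at hsa ⊢
      rcases eq_or_ne a 0 with rfl | ha
      · rw [Finsupp.single_eq_of_ne' hj0] at hsa ⊢
        rw [Finsupp.single_eq_same, Finsupp.single_eq_same, Finsupp.single_eq_same, h0, h0']
        omega
      · rw [Finsupp.single_eq_of_ne' (Ne.symm ha), Finsupp.single_eq_of_ne' (Ne.symm ha),
          Finsupp.single_eq_of_ne' (Ne.symm ha)]
        omega
    rwa [key] at this


lemma erase0_le_self (α : Fin (n+1) →₀ ℕ) : α.erase 0 ≤ α := by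
  refine Finsupp.le_def.mpr fun a => ?_
  rcases eq_or_ne a 0 with rfl | ha
  · simp [Finsupp.erase_same]
  · rw [Finsupp.erase_ne ha]

/-- Key Borel lemma: if `β ∈ B` and `erase 0 β ≤ γ` with `γ` of degree `r`, then `γ ∈ B`. -/
lemma KL (hclosed : ∀ α ∈ B, ∀ γ, stepUp n α γ → γ ∈ B)
    {r : ℕ} (hdegB : ∀ α ∈ B, α.degree = r)
    {β : Fin (n+1) →₀ ℕ} (hβ : β ∈ B) {γ : Fin (n+1) →₀ ℕ}
    (hγdeg : γ.degree = r) (hle : β.erase 0 ≤ γ) : γ ∈ B := by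
  have hle' : β.erase 0 ≤ γ.erase 0 := by
    refine Finsupp.le_def.mpr fun a => ?_
    rcases eq_or_ne a 0 with rfl | ha
    · simp [Finsupp.erase_same]
    · rw [Finsupp.erase_ne ha, Finsupp.erase_ne ha]
      have := Finsupp.le_def.mp hle a
      rwa [Finsupp.erase_ne ha] at this
  set δ := γ.erase 0 - β.erase 0 with hδ
  have hsum : β.erase 0 + δ = γ.erase 0 := add_tsub_cancel_of_le hle'
  have hδ0 : δ 0 = 0 := by simp [hδ, Finsupp.tsub_apply, Finsupp.erase_same]
  have e1 : (β.erase 0).degree + β 0 = r := by rw [degree_erase_add, hdegB β hβ]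
  have e2 : (γ.erase 0).degree + γ 0 = r := by rw [degree_erase_add, hγdeg]
  have e3 : (β.erase 0).degree + δ.degree = (γ.erase 0).degree := by
    rw [← degree_add, hsum]
  have hdle : δ.degree ≤ β 0 := by omega
  have hmem := moveMany hclosed δ.degree δ rfl hδ0 β hβ hdle
  have key : β - Finsupp.single 0 δ.degree + δ = γ := by
    ext a
    have hsa := DFunLike.congr_fun hsum a
    simp only [Finsupp.add_apply, Finsupp.tsub_apply] at hsa ⊢
    rcases eq_or_ne a 0 with rfl | ha
    · rw [Finsupp.single_eq_same]
      rw [Finsupp.erase_same, Finsupp.erase_same] at hsa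
      omega
    · rw [Finsupp.single_eq_of_ne' (Ne.symm ha)]
      rw [Finsupp.erase_ne ha, Finsupp.erase_ne ha] at hsa
      omega
  rwa [key] at hmem

/-- Key divisibility lemma: a monomial of degree `≥ r` dominating `erase 0 β`
dominates some element of `B`. -/
lemma Lmain (hclosed : ∀ α ∈ B, ∀ γ, stepUp n α γ → γ ∈ B)
    {r : ℕ} (hdegB : ∀ α ∈ B, α.degree = r)
    {β : Fin (n+1) →₀ ℕ} (hβ : β ∈ B) {μ : Fin (n+1) →₀ ℕ}
    (hle : β.erase 0 ≤ μ) (hdeg : r ≤ μ.degree) : ∃ γ ∈ B, γ ≤ μ := by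
  rcases le_or_gt (β 0) (μ 0) with h0 | h0
  · refine ⟨β, hβ, Finsupp.le_def.mpr fun a => ?_⟩
    rcases eq_or_ne a 0 with rfl | ha
    · exact h0
    · have := Finsupp.le_def.mp hle a
      rwa [Finsupp.erase_ne ha] at this
  · set ρ := (μ - β.erase 0).erase 0 with hρ
    have hsub : β.erase 0 + (μ - β.erase 0) = μ := add_tsub_cancel_of_le hle
    have hd1 : (β.erase 0).degree + (μ - β.erase 0).degree = μ.degree := by
      rw [← degree_add, hsub]
    have hμ0 : (μ - β.erase 0) 0 = μ 0 := by
      simp [Finsupp.tsub_apply, Finsupp.erase_same]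
    have hd2 : ρ.degree + μ 0 = (μ - β.erase 0).degree := by
      rw [hρ, ← hμ0, degree_erase_add]
    have e1 : (β.erase 0).degree + β 0 = r := by rw [degree_erase_add, hdegB β hβ]
    obtain ⟨g, hgle, hgdeg⟩ := extract ρ (β 0 - μ 0) (by omega)
    have hg0 : g 0 = 0 := by
      have := Finsupp.le_def.mp hgle 0
      rw [hρ, Finsupp.erase_same] at this
      omega
    have hmem := moveMany hclosed (β 0 - μ 0) g hgdeg hg0 β hβ (by omega)
    refine ⟨_, hmem, Finsupp.le_def.mpr fun a => ?_⟩
    simp only [Finsupp.add_apply, Finsupp.tsub_apply]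
    rcases eq_or_ne a 0 with rfl | ha
    · rw [Finsupp.single_eq_same, hg0]
      omega
    · rw [Finsupp.single_eq_of_ne' (Ne.symm ha)]
      have h1 : g a ≤ ρ a := Finsupp.le_def.mp hgle a
      have h2 : β.erase 0 a ≤ μ a := Finsupp.le_def.mp hle a
      rw [Finsupp.erase_ne ha] at h2
      rw [hρ, Finsupp.erase_ne ha, Finsupp.tsub_apply, Finsupp.erase_ne ha] at h1
      omega


variable {K : Type*} [Field K]

lemma pow_irrelevant_le (m k : ℕ) :
    (Ideal.span (Set.range (X : Fin m → MvPolynomial (Fin m) K))) ^ k ≤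
      Ideal.span ((fun s => monomial s (1:K)) '' {δ | δ.degree = k}) := by
  induction k with
  | zero =>
    have h1 : (monomial (0 : Fin m →₀ ℕ)) (1:K) = 1 := by
      simp [monomial_zero']
    have hmem : (1 : MvPolynomial (Fin m) K) ∈
        Ideal.span ((fun s => monomial s (1:K)) '' {δ | δ.degree = 0}) := by
      rw [← h1]
      exact Ideal.subset_span ⟨0, by simp, rfl⟩
    rw [pow_zero, Ideal.one_eq_top, (Ideal.eq_top_iff_one _).mpr hmem]
  | succ k ih =>
    rw [pow_succ]
    refine le_trans (Ideal.mul_mono_left ih) ?_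
    rw [Ideal.span_mul_span']
    refine Ideal.span_le.mpr ?_
    rintro q ⟨a, ⟨δ, hδ, rfl⟩, b, ⟨i, rfl⟩, rfl⟩
    show (monomial δ (1:K)) * X i ∈ _
    rw [show (X i : MvPolynomial (Fin m) K) = monomial (Finsupp.single i 1) 1 from rfl,
      monomial_mul, one_mul]
    exact Ideal.subset_span ⟨δ + Finsupp.single i 1,
      by rw [Set.mem_setOf_eq] at hδ ⊢; rw [degree_add, degree_single, hδ], rfl⟩

def Imon (K : Type*) [Field K] {n : ℕ} (B : Finset (Fin (n+1) →₀ ℕ)) :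
    Ideal (MvPolynomial (Fin (n+1)) K) :=
  Ideal.span ((fun γ => monomial γ (1:K)) '' (B : Set (Fin (n+1) →₀ ℕ)))

def Jmon (K : Type*) [Field K] {n : ℕ} (B : Finset (Fin (n+1) →₀ ℕ)) :
    Ideal (MvPolynomial (Fin (n+1)) K) :=
  Ideal.span ((fun γ => monomial γ (1:K)) ''
    ((fun β => β.erase 0) '' (B : Set (Fin (n+1) →₀ ℕ))))

lemma sat_eq (hclosed : ∀ α ∈ B, ∀ γ, stepUp n α γ → γ ∈ B)
    {r : ℕ} (hdegB : ∀ α ∈ B, α.degree = r) :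
    sat (n+1) (Imon K B) = Jmon K B := by
  classical
  refine le_antisymm (iSup_le fun k => ?_) (Ideal.span_le.mpr ?_)
  · intro p hp
    have hX : (X 0 : MvPolynomial (Fin (n+1)) K) ^ k ∈ (Ideal.span (Set.range X)) ^ k :=
      Ideal.pow_mem_pow (Ideal.subset_span (Set.mem_range_self 0)) k
    have hq : p * X 0 ^ k ∈ Imon K B := by
      have := Submodule.mem_colon.mp hp _ hX
      simpa [smul_eq_mul] using this
    rw [Imon, mem_ideal_span_monomial_image] at hq
    rw [Jmon, mem_ideal_span_monomial_image]
    intro μ hμ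
    have hsupp : μ + Finsupp.single 0 k ∈ (p * X 0 ^ k).support := by
      rw [mem_support_iff, X_pow_eq_monomial, coeff_mul_monomial, mul_one]
      exact mem_support_iff.mp hμ
    obtain ⟨β, hβ, hβle⟩ := hq _ hsupp
    refine ⟨β.erase 0, ⟨β, hβ, rfl⟩, Finsupp.le_def.mpr fun a => ?_⟩
    rcases eq_or_ne a 0 with rfl | ha
    · simp [Finsupp.erase_same]
    · rw [Finsupp.erase_ne ha]
      have := Finsupp.le_def.mp hβle a
      rwa [Finsupp.add_apply, Finsupp.single_eq_of_ne' (Ne.symm ha), add_zero] at this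
  · rintro g ⟨sμ, ⟨β, hβ, rfl⟩, rfl⟩
    have hcol : (fun γ => monomial γ (1:K)) (β.erase 0) ∈
        Submodule.colon
          ((Imon K B : Submodule (MvPolynomial (Fin (n+1)) K) (MvPolynomial (Fin (n+1)) K)))
          (((Ideal.span (Set.range X)) ^ r : Ideal (MvPolynomial (Fin (n+1)) K)) :
            Submodule (MvPolynomial (Fin (n+1)) K) (MvPolynomial (Fin (n+1)) K)) := by
      rw [Submodule.mem_colon]
      intro p hp
      have hp' : p ∈ Ideal.span ((fun s => monomial s (1:K)) '' {δ | δ.degree = r}) :=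
        pow_irrelevant_le (n+1) r hp
      rw [smul_eq_mul]
      have hmm : monomial (β.erase 0) (1:K) * p ∈
          Ideal.span {monomial (β.erase 0) (1:K)} *
            Ideal.span ((fun s => monomial s (1:K)) '' {δ | δ.degree = r}) :=
        Ideal.mul_mem_mul (Ideal.subset_span rfl) hp'
      rw [Ideal.span_mul_span'] at hmm
      refine Ideal.span_le.mpr ?_ hmm
      rintro q ⟨a, ha, b, ⟨δ, hδ, rfl⟩, rfl⟩
      rcases ha with rfl
      show (monomial (β.erase 0) (1:K)) * (monomial δ (1:K)) ∈ _
      have hqe : monomial (β.erase 0) (1:K) * monomial δ 1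
          = monomial (β.erase 0 + δ) (1:K) := by rw [monomial_mul, one_mul]
      rw [hqe]
      show monomial (β.erase 0 + δ) (1:K) ∈ Imon K B
      rw [Imon, mem_ideal_span_monomial_image]
      intro xi hxi
      rw [support_monomial, if_neg one_ne_zero, Finset.mem_singleton] at hxi
      subst hxi
      obtain ⟨γ, hγB, hγle⟩ := Lmain hclosed hdegB hβ
        (self_le_add_right (β.erase 0) δ)
        (by rw [degree_add, hδ]; omega)
      exact ⟨γ, hγB, hγle⟩
    exact Submodule.mem_iSup_of_mem r hcol


lemma erase_self_of_zero {m : ℕ} (g : Fin m →₀ ℕ) (i : Fin m) (h : g i = 0) :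
    g.erase i = g := by
  ext a
  rcases eq_or_ne a i with rfl | ha
  · rw [Finsupp.erase_same, h]
  · rw [Finsupp.erase_ne ha]

lemma erase_add_single0 (ν : Fin (n+1) →₀ ℕ) (k : ℕ) (h : ν 0 = 0) :
    (ν + Finsupp.single 0 k).erase 0 = ν := by
  ext a
  rcases eq_or_ne a 0 with rfl | ha
  · rw [Finsupp.erase_same, h]
  · rw [Finsupp.erase_ne ha, Finsupp.add_apply, Finsupp.single_eq_of_ne' (Ne.symm ha), add_zero]

lemma finrank_supported (m : ℕ) (s : Set (Fin m →₀ ℕ)) (hs : s.Finite) :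
    Module.finrank K (AddMonoidAlgebra.supported K K s : Submodule K (MvPolynomial (Fin m) K))
      = s.ncard := by
  haveI := hs.fintype
  rw [LinearEquiv.finrank_eq (AddMonoidAlgebra.supportedEquivFinsupp s), Module.finrank_finsupp_self,
    ← Nat.card_coe_set_eq, Nat.card_eq_fintype_card]

lemma finite_deg (m t : ℕ) : {μ : Fin m →₀ ℕ | μ.degree = t}.Finite :=
  (Finsupp.finite_of_degree_le t).subset fun _ hμ => le_of_eq hμ

lemma homog_eq (m t : ℕ) :
    homogeneousSubmodule (Fin m) K t
      = (AddMonoidAlgebra.supported K K {μ : Fin m →₀ ℕ | μ.degree = t} :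
          Submodule K (MvPolynomial (Fin m) K)) := by
  rw [homogeneousSubmodule_eq_finsupp_supported]

lemma inter_eq (t : ℕ) :
    (Submodule.restrictScalars K
        ((Jmon K B : Ideal (MvPolynomial (Fin (n+1)) K)) :
          Submodule (MvPolynomial (Fin (n+1)) K) (MvPolynomial (Fin (n+1)) K)) ⊓
      homogeneousSubmodule (Fin (n+1)) K t : Submodule K (MvPolynomial (Fin (n+1)) K))
    = AddMonoidAlgebra.supported K K {μ | μ.degree = t ∧ ∃ β ∈ B, β.erase 0 ≤ μ} := by
  ext p
  rw [Submodule.mem_inf, Submodule.restrictScalars_mem, homogeneousSubmodule_eq_finsupp_supported,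
    AddMonoidAlgebra.mem_supported, AddMonoidAlgebra.mem_supported, Jmon, mem_ideal_span_monomial_image]
  constructor
  · rintro ⟨h1, h2⟩ μ hμ
    refine ⟨h2 hμ, ?_⟩
    obtain ⟨sμ, ⟨β, hβ, rfl⟩, hle⟩ := h1 μ hμ
    exact ⟨β, hβ, hle⟩
  · intro h
    refine ⟨fun μ hμ => ?_, fun μ hμ => (h hμ).1⟩
    obtain ⟨β, hβ, hle⟩ := (h hμ).2
    exact ⟨β.erase 0, ⟨β, hβ, rfl⟩, hle⟩

lemma count_eq (hclosed : ∀ α ∈ B, ∀ γ, stepUp n α γ → γ ∈ B)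
    {r : ℕ} (hdegB : ∀ α ∈ B, α.degree = r)
    (hdiv' : ∀ γ : Fin (n+1) →₀ ℕ, γ.degree = r → γ ∉ B → γ 0 ≠ 0)
    {t : ℕ} (ht : r ≤ t) :
    {μ : Fin (n+1) →₀ ℕ | μ.degree = t} \ {μ | μ.degree = t ∧ ∃ β ∈ B, β.erase 0 ≤ μ}
      = (fun γ => γ.erase 0 + Finsupp.single 0 (t - r + γ 0)) ''
          {γ : Fin (n+1) →₀ ℕ | γ.degree = r ∧ γ ∉ B} := by
  ext μ
  constructor
  · rintro ⟨h1, h2⟩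
    rw [Set.mem_setOf_eq] at h1
    have h2' : ¬ ∃ β ∈ B, β.erase 0 ≤ μ := fun hc => h2 ⟨h1, hc⟩
    set ν := μ.erase 0 with hν
    have hν0 : ν 0 = 0 := Finsupp.erase_same
    have hdν : ν.degree + μ 0 = t := by rw [hν, degree_erase_add, h1]
    have hdlt : ν.degree < r := by
      by_contra hge
      push_neg at hge
      obtain ⟨g, hgle, hgdeg⟩ := extract ν r hge
      have hg0 : g 0 = 0 := by
        have := Finsupp.le_def.mp hgle 0
        omega
      have hgB : g ∈ B := by
        by_contra hgB
        exact hdiv' g hgdeg hgB hg0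
      exact h2' ⟨g, hgB, by
        rw [erase_self_of_zero g 0 hg0]
        exact le_trans hgle (erase0_le_self μ)⟩
    set γ := ν + Finsupp.single 0 (r - ν.degree) with hγ
    have hγd : γ.degree = r := by
      rw [hγ, degree_add, degree_single]
      omega
    have hγ0 : γ 0 = r - ν.degree := by
      rw [hγ, Finsupp.add_apply, hν0, Finsupp.single_eq_same, zero_add]
    have hγe : γ.erase 0 = ν := erase_add_single0 ν _ hν0
    have hγB : γ ∉ B := by
      intro hc
      exact h2' ⟨γ, hc, by rw [hγe]; exact erase0_le_self μ⟩
    refine ⟨γ, ⟨hγd, hγB⟩, ?_⟩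
    show γ.erase 0 + Finsupp.single 0 (t - r + γ 0) = μ
    rw [hγe, hγ0]
    ext a
    rcases eq_or_ne a 0 with rfl | ha
    · rw [Finsupp.add_apply, hν0, Finsupp.single_eq_same, zero_add]
      omega
    · rw [Finsupp.add_apply, Finsupp.single_eq_of_ne' (Ne.symm ha), add_zero, hν,
        Finsupp.erase_ne ha]
  · rintro ⟨γ, ⟨hγd, hγB⟩, rfl⟩
    have hγ0le : γ 0 ≤ r := hγd ▸ Finsupp.le_degree 0 γ
    have hed : (γ.erase 0).degree + γ 0 = r := by rw [degree_erase_add, hγd]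
    have hdeg : ((fun γ => γ.erase 0 + Finsupp.single 0 (t - r + γ 0)) γ).degree = t := by
      simp only [degree_add, degree_single]
      omega
    refine ⟨hdeg, ?_⟩
    rintro ⟨-, β, hβ, hle⟩
    have hle' : β.erase 0 ≤ γ := by
      refine Finsupp.le_def.mpr fun a => ?_
      rcases eq_or_ne a 0 with rfl | ha
      · rw [Finsupp.erase_same]
        exact Nat.zero_le _
      · have := Finsupp.le_def.mp hle a
        simp only [Finsupp.add_apply, Finsupp.single_eq_of_ne' (Ne.symm ha), add_zero,
          Finsupp.erase_ne ha] at this ⊢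
        exact this
    exact hγB (KL hclosed hdegB hβ hγd hle')

lemma inj_on {r t : ℕ} (ht : r ≤ t) :
    Set.InjOn (fun γ : Fin (n+1) →₀ ℕ => γ.erase 0 + Finsupp.single 0 (t - r + γ 0))
      {γ : Fin (n+1) →₀ ℕ | γ.degree = r ∧ γ ∉ B} := by
  rintro γ1 ⟨h1, -⟩ γ2 ⟨h2, -⟩ heq
  have he : γ1.erase 0 = γ2.erase 0 := by
    ext a
    rcases eq_or_ne a 0 with rfl | ha
    · rw [Finsupp.erase_same, Finsupp.erase_same]
    · have := DFunLike.congr_fun heq a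
      simpa only [Finsupp.add_apply, Finsupp.single_eq_of_ne' (Ne.symm ha), add_zero] using this
  have hd1 : (γ1.erase 0).degree + γ1 0 = r := by rw [degree_erase_add, h1]
  have hd2 : (γ2.erase 0).degree + γ2 0 = r := by rw [degree_erase_add, h2]
  rw [he] at hd1
  have h0 : γ1 0 = γ2 0 := by omega
  ext a
  rcases eq_or_ne a 0 with rfl | ha
  · exact h0
  · have := DFunLike.congr_fun he a
    rwa [Finsupp.erase_ne ha, Finsupp.erase_ne ha] at this

end St15

/-- constant Hilbert polynomial case: if `B` is a Borel set of
degree-`r` monomials whose complement `N` has cardinality `c ≤ r` and every monomial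
of `N` is divisible by `x_0`, then `K[x_0,...,x_n]/⟨B⟩^sat` has constant Hilbert
polynomial equal to `c`. -/
theorem statement15 {K : Type*} [Field K] [CharZero K] (n r c : ℕ)
    (B : Finset (Fin (n+1) →₀ ℕ))
    (hdeg : ∀ α ∈ B, (∑ j, α j) = r)
    (hclosed : ∀ α ∈ B, ∀ γ, stepUp n α γ → γ ∈ B)
    (hcard : {γ : Fin (n+1) →₀ ℕ | (∑ j, γ j) = r ∧ γ ∉ B}.ncard = c)
    (hcr : c ≤ r)
    (hdiv : ∀ γ : Fin (n+1) →₀ ℕ, (∑ j, γ j) = r → γ ∉ B → γ 0 ≠ 0) :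
    ∀ᶠ t : ℕ in atTop,
      hilb (n+1) (sat (n+1) (Ideal.span ((fun γ => monomial γ (1:K)) '' (B : Finset _)))) t
        = (c : ℤ) := by
  classical
  have hdegB : ∀ α ∈ B, α.degree = r := fun α h => by rw [St15.degF]; exact hdeg α h
  have hdiv' : ∀ γ : Fin (n+1) →₀ ℕ, γ.degree = r → γ ∉ B → γ 0 ≠ 0 := fun γ h1 h2 =>
    hdiv γ (by rw [← St15.degF]; exact h1) h2
  filter_upwards [eventually_ge_atTop r] with t ht
  unfold hilb
  rw [show (Ideal.span ((fun γ => monomial γ (1:K)) '' (B : Finset _)))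
      = St15.Imon K B from rfl,
    St15.sat_eq hclosed hdegB, St15.inter_eq, St15.homog_eq]
  show (Module.finrank K (AddMonoidAlgebra.supported K K {μ : Fin (n+1) →₀ ℕ | μ.degree = t} :
      Submodule K (MvPolynomial (Fin (n+1)) K)) : ℤ)
    - (Module.finrank K (AddMonoidAlgebra.supported K K
        {μ : Fin (n+1) →₀ ℕ | μ.degree = t ∧ ∃ β ∈ B, β.erase 0 ≤ μ} :
          Submodule K (MvPolynomial (Fin (n+1)) K)) : ℤ) = (c : ℤ)
  rw [St15.finrank_supported (n+1) _ (St15.finite_deg _ t),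
    St15.finrank_supported (n+1) _ ((St15.finite_deg (n+1) t).subset fun μ hμ => hμ.1)]
  set Mt := {μ : Fin (n+1) →₀ ℕ | μ.degree = t} with hMt
  set st := {μ : Fin (n+1) →₀ ℕ | μ.degree = t ∧ ∃ β ∈ B, β.erase 0 ≤ μ} with hst
  have hsub : st ⊆ Mt := fun μ hμ => hμ.1
  have hdiff : (Mt \ st).ncard = Mt.ncard - st.ncard :=
    Set.ncard_diff hsub ((St15.finite_deg (n+1) t).subset hsub)
  have hle : st.ncard ≤ Mt.ncard := Set.ncard_le_ncard hsub (St15.finite_deg (n+1) t)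
  have hcnt : (Mt \ st).ncard = c := by
    rw [hMt, hst, St15.count_eq hclosed hdegB hdiv' ht,
      Set.ncard_image_of_injOn (St15.inj_on ht)]
    have hNeq : {γ : Fin (n+1) →₀ ℕ | γ.degree = r ∧ γ ∉ B}
        = {γ : Fin (n+1) →₀ ℕ | (∑ j, γ j) = r ∧ γ ∉ B} := by
      ext γ
      rw [Set.mem_setOf_eq, Set.mem_setOf_eq, St15.degF]
    rw [hNeq, hcard]
  omega
end
end
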